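/- Let N be a positive integer and c > 0. Suppose f_0(n) ≥ c·√(n/2) for all n with N ≤ n ≤ 2N-1, and suppose f_0 satisfies f_0(2n+1) ≥ √2·f_0(n), f_0(2n) > √2·f_0(n) - 1/√2, and f_0(n) ≤ √((n+1)/2) for all n. Then f_0(n) > (c - (1+√2)/√N)·√(n/2) for all n ≥ N. -/

import Mathlib

open Real

set_option maxHeartbeats 800000 in
/-- Abstract form of Lemma (lower): if f₀(n) ≥ c√(n/2) for N ≤ n ≤ 2N-1 and f₀
satisfies the recursive inequalities, then f₀(n) > (c - (1+√2)/√N)·√(n/2) for n ≥ N. -/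
theorem stmt18 (f0 : ℕ → ℝ) (N : ℕ) (hN : 0 < N) (c : ℝ) (hc : 0 < c)
    (hbase : ∀ n : ℕ, N ≤ n → n ≤ 2 * N - 1 → f0 n ≥ c * Real.sqrt (n / 2))
    (hodd : ∀ n : ℕ, f0 (2 * n + 1) ≥ Real.sqrt 2 * f0 n)
    (heven : ∀ n : ℕ, f0 (2 * n) > Real.sqrt 2 * f0 n - 1 / Real.sqrt 2)
    (hub : ∀ n : ℕ, f0 n ≤ Real.sqrt ((n + 1) / 2)) :
    ∀ n : ℕ, N ≤ n →
      f0 n > (c - (1 + Real.sqrt 2) / Real.sqrt N) * Real.sqrt (n / 2) := by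
  have hs0 : (0:ℝ) < Real.sqrt 2 := Real.sqrt_pos.mpr (by norm_num)
  have hss : Real.sqrt 2 * Real.sqrt 2 = 2 := Real.mul_self_sqrt (by norm_num)
  have hs2 : Real.sqrt 2 < 2 := by nlinarith
  have hs1 : 1 < Real.sqrt 2 := by nlinarith
  have hd : (0:ℝ) < 2 - Real.sqrt 2 := by linarith
  have hNpos : (0:ℝ) < (N:ℝ) := by exact_mod_cast hN
  have hsN : (0:ℝ) < Real.sqrt N := Real.sqrt_pos.mpr hNpos
  -- c ≤ √2
  have hcle : c ≤ Real.sqrt 2 := by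
    have h1 := hbase N le_rfl (by omega)
    have h2 := hub N
    have h3 : Real.sqrt (((N:ℝ) + 1) / 2) ≤ Real.sqrt 2 * Real.sqrt ((N:ℝ)/2) := by
      rw [← Real.sqrt_mul (by norm_num : (0:ℝ) ≤ 2)]
      apply Real.sqrt_le_sqrt
      have : (1:ℝ) ≤ N := by exact_mod_cast hN
      linarith
    have hp : (0:ℝ) < Real.sqrt ((N:ℝ)/2) := Real.sqrt_pos.mpr (by linarith)
    have : c * Real.sqrt ((N:ℝ)/2) ≤ Real.sqrt 2 * Real.sqrt ((N:ℝ)/2) := by linarith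
    exact le_of_mul_le_mul_right this hp
  have key : ∀ n : ℕ, N ≤ n →
      f0 n ≥ c * Real.sqrt ((n:ℝ)/2) - (Real.sqrt ((n:ℝ)/(N:ℝ)) - 1)/(2 - Real.sqrt 2) := by
    intro n
    induction n using Nat.strong_induction_on with
    | _ n ih =>
      intro hn
      by_cases hsmall : n < 2 * N
      · have h1 := hbase n hn (by omega)
        have hnN : (1:ℝ) ≤ (n:ℝ)/(N:ℝ) := by
          rw [le_div_iff₀ hNpos]
          have : (N:ℝ) ≤ (n:ℝ) := by exact_mod_cast hn
          linarith
        have h2 : (1:ℝ) ≤ Real.sqrt ((n:ℝ)/(N:ℝ)) := Real.one_le_sqrt.mpr hnN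
        have h3 : (0:ℝ) ≤ (Real.sqrt ((n:ℝ)/(N:ℝ)) - 1)/(2 - Real.sqrt 2) :=
          div_nonneg (by linarith) (by linarith)
        linarith
      · push_neg at hsmall
        set m := n / 2 with hm
        have hmN : N ≤ m := by omega
        have hmn : m < n := by omega
        have IH := ih m hmn hmN
        have hm1 : (1:ℝ) ≤ (m:ℝ) := by exact_mod_cast (hN.trans_le hmN)
        have hsm1 : (1:ℝ) ≤ Real.sqrt m := Real.one_le_sqrt.mpr hm1
        have e1 : Real.sqrt 2 * Real.sqrt ((m:ℝ)/2) = Real.sqrt m := by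
          rw [← Real.sqrt_mul (by norm_num : (0:ℝ) ≤ 2)]
          ring_nf
        have e2 : Real.sqrt 2 * Real.sqrt ((m:ℝ)/(N:ℝ)) = Real.sqrt (2*(m:ℝ)/(N:ℝ)) := by
          rw [← Real.sqrt_mul (by norm_num : (0:ℝ) ≤ 2)]
          ring_nf
        have hXY : Real.sqrt 2 * Real.sqrt ((m:ℝ)/(N:ℝ)) ≤ Real.sqrt ((n:ℝ)/(N:ℝ)) := by
          rw [e2]
          apply Real.sqrt_le_sqrt
          have h2m : (2*(m:ℝ)) ≤ (n:ℝ) := by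
            have : 2 * m ≤ n := by omega
            exact_mod_cast this
          exact div_le_div_of_nonneg_right h2m hNpos.le
        -- error recursion: √2 * E(m) + 1/√2 ≤ E(n)
        have herr : Real.sqrt 2 * ((Real.sqrt ((m:ℝ)/(N:ℝ)) - 1)/(2 - Real.sqrt 2)) + 1/Real.sqrt 2
            ≤ (Real.sqrt ((n:ℝ)/(N:ℝ)) - 1)/(2 - Real.sqrt 2) := by
          have heq : Real.sqrt 2 * ((Real.sqrt ((m:ℝ)/(N:ℝ)) - 1)/(2 - Real.sqrt 2)) + 1/Real.sqrt 2
              = (Real.sqrt 2 * Real.sqrt ((m:ℝ)/(N:ℝ)) - 1)/(2 - Real.sqrt 2) := by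
            field_simp
            ring_nf
            linear_combination (-1:ℝ) * hss
          rw [heq]
          exact div_le_div_of_nonneg_right (by linarith) hd.le
        rcases Nat.even_or_odd n with he | ho
        · have hn2 : n = 2 * m := by
            obtain ⟨k, hk⟩ := he; omega
          have hev := heven m
          rw [← hn2] at hev
          have ecast : ((n:ℝ))/2 = (m:ℝ) := by rw [hn2]; push_cast; ring
          calc f0 n ≥ Real.sqrt 2 * f0 m - 1/Real.sqrt 2 := le_of_lt hev
            _ ≥ Real.sqrt 2 * (c * Real.sqrt ((m:ℝ)/2) - (Real.sqrt ((m:ℝ)/(N:ℝ)) - 1)/(2 - Real.sqrt 2)) - 1/Real.sqrt 2 := by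
                have := mul_le_mul_of_nonneg_left IH (le_of_lt hs0)
                linarith
            _ = c * Real.sqrt m - (Real.sqrt 2 * ((Real.sqrt ((m:ℝ)/(N:ℝ)) - 1)/(2 - Real.sqrt 2)) + 1/Real.sqrt 2) := by
                rw [← e1]; ring
            _ ≥ c * Real.sqrt ((n:ℝ)/2) - (Real.sqrt ((n:ℝ)/(N:ℝ)) - 1)/(2 - Real.sqrt 2) := by
                rw [ecast]
                linarith
        · have hn2 : n = 2 * m + 1 := by
            obtain ⟨k, hk⟩ := ho; omega
          have hod := hodd m
          rw [← hn2] at hod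
          have hup : Real.sqrt ((n:ℝ)/2) ≤ Real.sqrt m + 1/2 := by
            have hsq : Real.sqrt m * Real.sqrt m = (m:ℝ) := Real.mul_self_sqrt (by linarith)
            have hcn : ((n:ℝ)) = 2*(m:ℝ) + 1 := by rw [hn2]; push_cast; ring
            have h1 : ((n:ℝ))/2 ≤ (Real.sqrt m + 1/2)^2 := by nlinarith
            calc Real.sqrt ((n:ℝ)/2) ≤ Real.sqrt ((Real.sqrt m + 1/2)^2) := Real.sqrt_le_sqrt h1
              _ = Real.sqrt m + 1/2 := Real.sqrt_sq (by linarith)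
          have hloss : c * Real.sqrt ((n:ℝ)/2) - c * Real.sqrt m ≤ 1/Real.sqrt 2 := by
            have h1 : c * Real.sqrt ((n:ℝ)/2) - c * Real.sqrt m ≤ c * (1/2) := by nlinarith
            have h3 : Real.sqrt 2 / 2 = 1 / Real.sqrt 2 := by
              field_simp
              norm_num
            linarith
          calc f0 n ≥ Real.sqrt 2 * f0 m := hod
            _ ≥ Real.sqrt 2 * (c * Real.sqrt ((m:ℝ)/2) - (Real.sqrt ((m:ℝ)/(N:ℝ)) - 1)/(2 - Real.sqrt 2)) := by
                have := mul_le_mul_of_nonneg_left IH (le_of_lt hs0)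
                linarith
            _ = c * Real.sqrt m - Real.sqrt 2 * ((Real.sqrt ((m:ℝ)/(N:ℝ)) - 1)/(2 - Real.sqrt 2)) := by
                rw [← e1]; ring
            _ ≥ c * Real.sqrt ((n:ℝ)/2) - (Real.sqrt ((n:ℝ)/(N:ℝ)) - 1)/(2 - Real.sqrt 2) := by
                linarith
  -- conclude
  intro n hn
  have hkey := key n hn
  have hnpos : (0:ℝ) < (n:ℝ) := by
    have : 0 < n := hN.trans_le hn
    exact_mod_cast this
  have hsn : (0:ℝ) < Real.sqrt ((n:ℝ)/2) := Real.sqrt_pos.mpr (by linarith)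
  have hE : (Real.sqrt ((n:ℝ)/(N:ℝ)) - 1)/(2 - Real.sqrt 2) <
      (1 + Real.sqrt 2) / Real.sqrt N * Real.sqrt ((n:ℝ)/2) := by
    have hdiv1 : Real.sqrt ((n:ℝ)/(N:ℝ)) = Real.sqrt n / Real.sqrt N :=
      Real.sqrt_div (by linarith) _
    have hdiv2 : Real.sqrt ((n:ℝ)/2) = Real.sqrt n / Real.sqrt 2 :=
      Real.sqrt_div (by linarith) _
    have heq : (1 + Real.sqrt 2) / Real.sqrt N * Real.sqrt ((n:ℝ)/2) =
        Real.sqrt ((n:ℝ)/(N:ℝ)) / (2 - Real.sqrt 2) := by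
      rw [hdiv1, hdiv2]
      field_simp
      linear_combination (-1:ℝ) * hss
    rw [heq]
    exact (div_lt_div_iff_of_pos_right hd).mpr (by linarith)
  have expand : (c - (1 + Real.sqrt 2) / Real.sqrt N) * Real.sqrt ((n:ℝ)/2)
      = c * Real.sqrt ((n:ℝ)/2) - (1 + Real.sqrt 2) / Real.sqrt N * Real.sqrt ((n:ℝ)/2) := by
    ring
  rw [expand]
  linarith [hkey, hE]
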